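/- arXiv:2208.05635 — 2 statements merged into one kernel-verified Lean document; each statement's English description precedes it below -/
import Mathlib

section
/- Let s, n, K be positive integers, let d_{ik} ∈ {0,1} and z_{ik}, z_{ik0} ∈ ℝ^s (i = 1,…,n; k = 1,…,K) be such that for every i there exists k with d_{ik} = 1, and fix an integer N ≥ n. Let β ∈ ℝ^s and p_1, …, p_n > 0 with ∑_i p_i = 1; set α = ∑_{i=1}^n φ_i(β) p_i and w_i = (N − n) φ_i(β) p_i / α. Let β' ∈ ℝ^s be any vector with ℓ₁(β') ≥ ℓ₁(β), where ℓ₁(γ) = ∑_{i=1}^n ∑_{k=1}^K [d_{ik} log g(z_{ik};γ) + (1−d_{ik}) log(1−g(z_{ik};γ)) + w_i log(1−g(z_{ik0};γ))], and set p_i' = (w_i + 1)/N and α' = ∑_{i=1}^n φ_i(β') p_i'. Then ℓ̃_p(N, β', α', {p_i'}) ≥ ℓ̃_p(N, β, α, {p_i}). (EM monotonicity with N fixed.) -/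
/-- Logistic capture probability `g(z;β) = exp(⟪β,z⟫)/(1 + exp(⟪β,z⟫))`. -/
noncomputable def capProb {s : ℕ} (β z : Fin s → ℝ) : ℝ :=
  Real.exp (∑ j, β j * z j) / (1 + Real.exp (∑ j, β j * z j))

/-- `φ_i(β) = ∏_{k=1}^K (1 − g(z_{ik0};β))`: probability of never being captured. -/
noncomputable def phiNever {s K : ℕ} (β : Fin s → ℝ) (z0 : Fin K → Fin s → ℝ) : ℝ :=
  ∏ k, (1 - capProb β (z0 k))

/-- The log empirical likelihood `ℓ̃_e(N, β, α, {p_i})`. -/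
noncomputable def logEL {s n K : ℕ} (d : Fin n → Fin K → Bool)
    (z : Fin n → Fin K → Fin s → ℝ) (N : ℕ) (β : Fin s → ℝ) (α : ℝ)
    (p : Fin n → ℝ) : ℝ :=
  Real.log (N.choose n) + ((N : ℝ) - n) * Real.log α + ∑ i, Real.log (p i) +
    ∑ i, ∑ k,
      (if d i k then Real.log (capProb β (z i k))
       else Real.log (1 - capProb β (z i k)))

/-- The penalty `f(N) = −(N − Ñ_c)² · 1{N > Ñ_c}`. -/
noncomputable def penalty (Nc : ℝ) (N : ℕ) : ℝ :=
  if Nc < (N : ℝ) then -(((N : ℝ) - Nc) ^ 2) else 0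

/-- The M-step objective `ℓ₁`. -/
noncomputable def ellOne {s n K : ℕ} (d : Fin n → Fin K → Bool)
    (z z0 : Fin n → Fin K → Fin s → ℝ) (w : Fin n → ℝ) (γ : Fin s → ℝ) : ℝ :=
  ∑ i, ∑ k,
    ((if d i k then Real.log (capProb γ (z i k))
      else Real.log (1 - capProb γ (z i k)))
      + w i * Real.log (1 - capProb γ (z0 i k)))

lemma capProb_pos {s : ℕ} (β z : Fin s → ℝ) : 0 < capProb β z :=
  div_pos (Real.exp_pos _) (by positivity)

lemma one_sub_capProb_pos {s : ℕ} (β z : Fin s → ℝ) : 0 < 1 - capProb β z := by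
  have h1 : (0:ℝ) < 1 + Real.exp (∑ j, β j * z j) := by positivity
  have h2 : capProb β z < 1 := by
    rw [capProb, div_lt_one h1]; linarith [Real.exp_pos (∑ j, β j * z j)]
  linarith

lemma phiNever_pos {s K : ℕ} (β : Fin s → ℝ) (z0 : Fin K → Fin s → ℝ) :
    0 < phiNever β z0 :=
  Finset.prod_pos fun k _ => one_sub_capProb_pos β (z0 k)

lemma log_phiNever {s K : ℕ} (β : Fin s → ℝ) (z0 : Fin K → Fin s → ℝ) :
    Real.log (phiNever β z0) = ∑ k, Real.log (1 - capProb β (z0 k)) :=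
  Real.log_prod fun k _ => (one_sub_capProb_pos β (z0 k)).ne'

lemma gibbs' {m : ℕ} (a b : Fin m → ℝ) (ha : ∀ i, 0 ≤ a i) (hb : ∀ i, 0 < b i)
    (hab : ∑ i, a i = ∑ i, b i) :
    ∑ i, a i * Real.log (b i) ≤ ∑ i, a i * Real.log (a i) := by
  have h : ∀ i : Fin m, a i * Real.log (b i) ≤ a i * Real.log (a i) + (b i - a i) := by
    intro i
    rcases eq_or_lt_of_le (ha i) with h0 | h0
    · rw [← h0]; simpa using (hb i).le
    · have hlog := Real.log_le_sub_one_of_pos (div_pos (hb i) h0)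
      rw [Real.log_div (hb i).ne' (ne_of_gt h0)] at hlog
      have h2 := mul_le_mul_of_nonneg_left hlog (le_of_lt h0)
      have h3 : a i * (b i / a i - 1) = b i - a i := by field_simp
      nlinarith
  calc ∑ i, a i * Real.log (b i)
      ≤ ∑ i, (a i * Real.log (a i) + (b i - a i)) := Finset.sum_le_sum (fun i _ => h i)
    _ = ∑ i, a i * Real.log (a i) := by
        rw [Finset.sum_add_distrib, Finset.sum_sub_distrib, hab]; ring

lemma ellOne_eq {s n K : ℕ} (d : Fin n → Fin K → Bool)
    (z z0 : Fin n → Fin K → Fin s → ℝ) (w : Fin n → ℝ) (γ : Fin s → ℝ) :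
    ellOne d z z0 w γ =
      (∑ i, ∑ k, (if d i k then Real.log (capProb γ (z i k))
        else Real.log (1 - capProb γ (z i k))))
      + ∑ i, w i * Real.log (phiNever γ (z0 i)) := by
  unfold ellOne
  rw [← Finset.sum_add_distrib]
  refine Finset.sum_congr rfl fun i _ => ?_
  rw [Finset.sum_add_distrib, log_phiNever, Finset.mul_sum]

/-- EM monotonicity with `N` fixed.  One EM iteration — E-step
weights `w_i = (N−n)φ_i(β)p_i/α` with `α = ∑ φ_i(β)p_i`, any `β'` with
`ℓ₁(β') ≥ ℓ₁(β)`, update `p_i' = (w_i+1)/N`, `α' = ∑ φ_i(β')p_i'` — does not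
decrease the penalized log empirical likelihood `ℓ̃_p = ℓ̃_e + C·f(N)`. -/
theorem stmt9 (s n K : ℕ) (hs : 0 < s) (hn : 0 < n) (hK : 0 < K)
    (d : Fin n → Fin K → Bool) (z z0 : Fin n → Fin K → Fin s → ℝ)
    (hcap : ∀ i, ∃ k, d i k = true)
    (N : ℕ) (hN : n ≤ N) (β : Fin s → ℝ)
    (p : Fin n → ℝ) (hp : ∀ i, 0 < p i) (hp1 : ∑ i, p i = 1)
    (α : ℝ) (hα : α = ∑ i, phiNever β (z0 i) * p i)
    (w : Fin n → ℝ) (hw : ∀ i, w i = ((N : ℝ) - n) * phiNever β (z0 i) * p i / α)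
    (β' : Fin s → ℝ) (hβ' : ellOne d z z0 w β ≤ ellOne d z z0 w β')
    (p' : Fin n → ℝ) (hp' : ∀ i, p' i = (w i + 1) / (N : ℝ))
    (α' : ℝ) (hα' : α' = ∑ i, phiNever β' (z0 i) * p' i)
    (Ct : ℝ) (hCt : 0 ≤ Ct) (Nc : ℝ) :
    logEL d z N β α p + Ct * penalty Nc N ≤
      logEL d z N β' α' p' + Ct * penalty Nc N := by
  have hne : (Finset.univ : Finset (Fin n)).Nonempty := by
    have : Nonempty (Fin n) := ⟨⟨0, hn⟩⟩
    exact Finset.univ_nonempty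
  set A : ℝ := ((N : ℝ) - n) with hAdef
  have hA : 0 ≤ A := by
    have : (n : ℝ) ≤ (N : ℝ) := by exact_mod_cast hN
    simp [hAdef]; linarith
  have hN0 : (0 : ℝ) < N := by
    have : 0 < N := lt_of_lt_of_le hn hN
    exact_mod_cast this
  have hα0 : 0 < α := by
    rw [hα]
    exact Finset.sum_pos (fun i _ => mul_pos (phiNever_pos β (z0 i)) (hp i)) hne
  have hw0 : ∀ i, 0 ≤ w i := fun i => by
    rw [hw]
    exact div_nonneg (mul_nonneg (mul_nonneg hA (phiNever_pos β (z0 i)).le) (hp i).le) hα0.le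
  have hsumw : ∑ i, w i = A := by
    have h1 : ∑ i, w i = (∑ i, A * (phiNever β (z0 i) * p i)) / α := by
      rw [Finset.sum_div]
      exact Finset.sum_congr rfl fun i _ => by rw [hw]; ring_nf
    rw [h1, ← Finset.mul_sum, ← hα]
    field_simp
  have hp'pos : ∀ i, 0 < p' i := fun i => by
    rw [hp']; exact div_pos (by linarith [hw0 i]) hN0
  have hwp : ∀ i, w i + 1 = (N : ℝ) * p' i := fun i => by
    rw [hp']; field_simp
  have hsump' : ∑ i, p' i = 1 := by
    have h1 : ∑ i, p' i = (∑ i, (w i + 1)) / (N : ℝ) := by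
      rw [Finset.sum_div]; exact Finset.sum_congr rfl fun i _ => by rw [hp']
    have h2 : ∑ i, (w i + 1) = (N : ℝ) := by
      rw [Finset.sum_add_distrib, hsumw, Finset.sum_const, Finset.card_univ,
        Fintype.card_fin, nsmul_eq_mul, mul_one, hAdef]
      ring
    rw [h1, h2, div_self hN0.ne']
  have hα'0 : 0 < α' := by
    rw [hα']
    exact Finset.sum_pos (fun i _ => mul_pos (phiNever_pos β' (z0 i)) (hp'pos i)) hne
  -- Gibbs step for the p-part
  have hGp : ∑ i, (w i + 1) * Real.log (p i) ≤ ∑ i, (w i + 1) * Real.log (p' i) := by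
    have hg := gibbs' p' p (fun i => (hp'pos i).le) hp (by rw [hsump', hp1])
    have e1 : ∀ f : Fin n → ℝ, ∑ i, (w i + 1) * f i = (N : ℝ) * ∑ i, p' i * f i := by
      intro f
      rw [Finset.mul_sum]
      exact Finset.sum_congr rfl fun i _ => by rw [hwp i]; ring
    rw [e1 (fun i => Real.log (p i)), e1 (fun i => Real.log (p' i))]
    exact mul_le_mul_of_nonneg_left hg hN0.le
  have hGp' : ∑ i, w i * Real.log (p i) + ∑ i, Real.log (p i) ≤
      ∑ i, w i * Real.log (p' i) + ∑ i, Real.log (p' i) := by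
    have e : ∀ q : Fin n → ℝ, ∑ i, (w i + 1) * Real.log (q i) =
        ∑ i, w i * Real.log (q i) + ∑ i, Real.log (q i) := by
      intro q
      rw [← Finset.sum_add_distrib]
      exact Finset.sum_congr rfl fun i _ => by ring
    rw [e p, e p'] at hGp
    exact hGp
  -- M-step fact
  have hF1 : (∑ i, ∑ k, (if d i k then Real.log (capProb β (z i k))
        else Real.log (1 - capProb β (z i k))))
      + ∑ i, w i * Real.log (phiNever β (z0 i)) ≤
      (∑ i, ∑ k, (if d i k then Real.log (capProb β' (z i k))
        else Real.log (1 - capProb β' (z i k))))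
      + ∑ i, w i * Real.log (phiNever β' (z0 i)) := by
    rw [← ellOne_eq, ← ellOne_eq]
    exact hβ'
  -- KEY inequality
  have hKey : A * Real.log α
      + (∑ i, w i * Real.log (phiNever β' (z0 i)) + ∑ i, w i * Real.log (p' i))
      - (∑ i, w i * Real.log (phiNever β (z0 i)) + ∑ i, w i * Real.log (p i))
      ≤ A * Real.log α' := by
    rcases eq_or_lt_of_le hA with hA0 | hApos
    · have hwz : ∀ i, w i = 0 := fun i => by rw [hw, ← hA0]; simp
      simp [hwz, ← hA0]
    · have hwpos : ∀ i, 0 < w i := fun i => by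
        rw [hw]
        exact div_pos (mul_pos (mul_pos hApos (phiNever_pos β (z0 i))) (hp i)) hα0
      have hlogw : ∀ i, Real.log (w i) =
          Real.log A + Real.log (phiNever β (z0 i)) + Real.log (p i) - Real.log α := by
        intro i
        rw [hw]
        rw [Real.log_div (mul_ne_zero (mul_ne_zero hApos.ne' (phiNever_pos β (z0 i)).ne') (hp i).ne') hα0.ne',
          Real.log_mul (mul_ne_zero hApos.ne' (phiNever_pos β (z0 i)).ne') (hp i).ne',
          Real.log_mul hApos.ne' (phiNever_pos β (z0 i)).ne']
      have heq1 : ∑ i, w i * Real.log (phiNever β (z0 i)) + ∑ i, w i * Real.log (p i)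
          = ∑ i, w i * Real.log (w i) - A * Real.log A + A * Real.log α := by
        have h2 : ∑ i, w i * Real.log (w i) =
            ∑ i, (w i * Real.log (phiNever β (z0 i)) + w i * Real.log (p i)
              + w i * (Real.log A - Real.log α)) := by
          refine Finset.sum_congr rfl fun i _ => ?_
          rw [hlogw i]; ring
        rw [h2, Finset.sum_add_distrib, Finset.sum_add_distrib, ← Finset.sum_mul, hsumw]
        ring
      set b : Fin n → ℝ := fun i => A * (phiNever β' (z0 i) * p' i) / α' with hbdef
      have hbpos : ∀ i, 0 < b i := fun i => by
        rw [hbdef]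
        exact div_pos (mul_pos hApos (mul_pos (phiNever_pos β' (z0 i)) (hp'pos i))) hα'0
      have hsumb : ∑ i, w i = ∑ i, b i := by
        rw [hsumw, hbdef]
        simp only
        rw [← Finset.sum_div, ← Finset.mul_sum, ← hα']
        field_simp
      have hlogb : ∀ i, Real.log (b i) =
          Real.log A + Real.log (phiNever β' (z0 i)) + Real.log (p' i) - Real.log α' := by
        intro i
        rw [hbdef]
        simp only
        rw [Real.log_div (mul_ne_zero hApos.ne' (mul_pos (phiNever_pos β' (z0 i)) (hp'pos i)).ne') hα'0.ne',
          Real.log_mul hApos.ne' (mul_pos (phiNever_pos β' (z0 i)) (hp'pos i)).ne',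
          Real.log_mul (phiNever_pos β' (z0 i)).ne' (hp'pos i).ne']
        ring
      have hgib := gibbs' w b (fun i => (hwpos i).le) hbpos hsumb
      have h3 : ∑ i, w i * Real.log (b i) =
          ∑ i, (w i * Real.log (phiNever β' (z0 i)) + w i * Real.log (p' i)
            + w i * (Real.log A - Real.log α')) := by
        refine Finset.sum_congr rfl fun i _ => ?_
        rw [hlogb i]; ring
      rw [h3, Finset.sum_add_distrib, Finset.sum_add_distrib, ← Finset.sum_mul, hsumw] at hgib
      linarith
  have key : logEL d z N β α p ≤ logEL d z N β' α' p' := by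
    unfold logEL
    rw [← hAdef]
    linarith [hF1, hGp', hKey]
  linarith
end

section
/- Let s, n, K be positive integers, let d_{ik} ∈ {0,1} and z_{ik}, z_{ik0} ∈ ℝ^s (i = 1,…,n; k = 1,…,K) be such that for every i there exists k with d_{ik} = 1. Let N ≥ n be an integer, β ∈ ℝ^s, and p_1, …, p_n > 0 with ∑_i p_i = 1; set α = ∑_{i=1}^n φ_i(β) p_i and w_i = (N − n) φ_i(β) p_i / α. Let β' ∈ ℝ^s satisfy ℓ₁(β') ≥ ℓ₁(β), where ℓ₁(γ) = ∑_{i=1}^n ∑_{k=1}^K [d_{ik} log g(z_{ik};γ) + (1−d_{ik}) log(1−g(z_{ik};γ)) + w_i log(1−g(z_{ik0};γ))]; set p_i' = (w_i + 1)/N and α' = ∑_{i=1}^n φ_i(β') p_i'. Let N' be any integer ≥ n maximizing M ↦ log C(M,n) + (M − n) log α' + C·f(M) over integers M ≥ n. Then ℓ̃_p(N', β', α', {p_i'}) ≥ ℓ̃_p(N, β, α, {p_i}). (EM monotonicity with N unknown.) -/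
lemma gibbs {m : ℕ} (q x : Fin m → ℝ) (hq : ∀ i, 0 < q i) (hx : ∀ i, 0 < x i)
    (hq1 : ∑ i, q i = 1) (hx1 : ∑ i, x i ≤ 1) :
    ∑ i, q i * Real.log (x i) ≤ ∑ i, q i * Real.log (q i) := by
  have h : ∀ i, q i * Real.log (x i) - q i * Real.log (q i) ≤ x i - q i := by
    intro i
    have h1 : Real.log (x i / q i) ≤ x i / q i - 1 :=
      Real.log_le_sub_one_of_pos (div_pos (hx i) (hq i))
    have h2 : Real.log (x i / q i) = Real.log (x i) - Real.log (q i) :=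
      Real.log_div (hx i).ne' (hq i).ne'
    have h4 := mul_le_mul_of_nonneg_left h1 (hq i).le
    rw [h2] at h4
    have h3 : q i * (x i / q i - 1) = x i - q i := by
      have hne := (hq i).ne'
      field_simp
    linarith [h4, h3]
  have h5 := Finset.sum_le_sum (fun i (_ : i ∈ Finset.univ) => h i)
  rw [Finset.sum_sub_distrib] at h5
  have h6 : ∑ i, (x i - q i) ≤ 0 := by
    rw [Finset.sum_sub_distrib, hq1]; linarith
  linarith [h5, h6]

/-- EM monotonicity with `N` unknown.  One EM iteration — E-step
weights `w_i = (N−n)φ_i(β)p_i/α` with `α = ∑ φ_i(β)p_i`, any `β'` with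
`ℓ₁(β') ≥ ℓ₁(β)`, update `p_i' = (w_i+1)/N`, `α' = ∑ φ_i(β')p_i'`, and then
step 2′, replacing `N` by any integer `N' ≥ n` maximizing
`M ↦ log C(M,n) + (M−n) log α' + C·f(M)` over integers `M ≥ n` — does not
decrease the penalized log empirical likelihood `ℓ̃_p = ℓ̃_e + C·f(N)`. -/
theorem stmt10 (s n K : ℕ) (hs : 0 < s) (hn : 0 < n) (hK : 0 < K)
    (d : Fin n → Fin K → Bool) (z z0 : Fin n → Fin K → Fin s → ℝ)
    (hcap : ∀ i, ∃ k, d i k = true)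
    (N : ℕ) (hN : n ≤ N) (β : Fin s → ℝ)
    (p : Fin n → ℝ) (hp : ∀ i, 0 < p i) (hp1 : ∑ i, p i = 1)
    (α : ℝ) (hα : α = ∑ i, phiNever β (z0 i) * p i)
    (w : Fin n → ℝ) (hw : ∀ i, w i = ((N : ℝ) - n) * phiNever β (z0 i) * p i / α)
    (β' : Fin s → ℝ) (hβ' : ellOne d z z0 w β ≤ ellOne d z z0 w β')
    (p' : Fin n → ℝ) (hp' : ∀ i, p' i = (w i + 1) / (N : ℝ))
    (α' : ℝ) (hα' : α' = ∑ i, phiNever β' (z0 i) * p' i)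
    (Ct : ℝ) (hCt : 0 ≤ Ct) (Nc : ℝ)
    (N' : ℕ) (hN' : n ≤ N')
    (hmax : ∀ M : ℕ, n ≤ M →
      Real.log (M.choose n) + ((M : ℝ) - n) * Real.log α' + Ct * penalty Nc M ≤
      Real.log (N'.choose n) + ((N' : ℝ) - n) * Real.log α' + Ct * penalty Nc N') :
    logEL d z N β α p + Ct * penalty Nc N ≤
      logEL d z N' β' α' p' + Ct * penalty Nc N' := by
  have hne : Nonempty (Fin n) := ⟨⟨0, hn⟩⟩
  have hΦpos : ∀ i, 0 < phiNever β (z0 i) := fun i => phiNever_pos _ _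
  have hΦ'pos : ∀ i, 0 < phiNever β' (z0 i) := fun i => phiNever_pos _ _
  have hαpos : 0 < α := by
    rw [hα]
    exact Finset.sum_pos (fun i _ => mul_pos (hΦpos i) (hp i)) Finset.univ_nonempty
  have hNn : (0:ℝ) ≤ (N:ℝ) - n := by
    have h := (Nat.cast_le (α := ℝ)).mpr hN; linarith
  have hNpos : (0:ℝ) < N := by
    have h : (0:ℝ) < (n:ℝ) := Nat.cast_pos.mpr hn; linarith
  set q : Fin n → ℝ := fun i => phiNever β (z0 i) * p i / α with hqdef
  have hqpos : ∀ i, 0 < q i := fun i => div_pos (mul_pos (hΦpos i) (hp i)) hαpos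
  have hq1 : ∑ i, q i = 1 := by
    simp only [hqdef]
    rw [← Finset.sum_div, ← hα, div_self hαpos.ne']
  have hwq : ∀ i, w i = ((N:ℝ) - n) * q i := by
    intro i; rw [hw i]; simp only [hqdef]; ring
  have hwnn : ∀ i, 0 ≤ w i := fun i => by
    rw [hwq i]; exact mul_nonneg hNn (hqpos i).le
  have hwsum : ∑ i, w i = (N:ℝ) - n := by
    calc ∑ i, w i = ∑ i, ((N:ℝ) - n) * q i := Finset.sum_congr rfl fun i _ => hwq i
    _ = ((N:ℝ) - n) * ∑ i, q i := by rw [Finset.mul_sum]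
    _ = (N:ℝ) - n := by rw [hq1, mul_one]
  have hp'pos : ∀ i, 0 < p' i := fun i => by
    rw [hp' i]; exact div_pos (by linarith [hwnn i]) hNpos
  have hp'1 : ∑ i, p' i = 1 := by
    have : ∑ i, p' i = (∑ i, (w i + 1)) / (N:ℝ) := by
      rw [Finset.sum_div]
      exact Finset.sum_congr rfl fun i _ => hp' i
    rw [this, Finset.sum_add_distrib, hwsum]
    simp only [Finset.sum_const, Finset.card_univ, Fintype.card_fin, nsmul_eq_mul, mul_one]
    field_simp
    ring
  have hα'pos : 0 < α' := by
    rw [hα']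
    exact Finset.sum_pos (fun i _ => mul_pos (hΦ'pos i) (hp'pos i)) Finset.univ_nonempty
  set q' : Fin n → ℝ := fun i => phiNever β' (z0 i) * p' i / α' with hq'def
  have hq'pos : ∀ i, 0 < q' i := fun i => div_pos (mul_pos (hΦ'pos i) (hp'pos i)) hα'pos
  have hq'1 : ∑ i, q' i = 1 := by
    simp only [hq'def]
    rw [← Finset.sum_div, ← hα', div_self hα'pos.ne']
  -- Gibbs inequalities
  have G1 : ∑ i, q i * Real.log (q' i) ≤ ∑ i, q i * Real.log (q i) :=
    gibbs q q' hqpos hq'pos hq1 (le_of_eq hq'1)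
  have G1s : ((N:ℝ) - n) * ∑ i, q i * Real.log (q' i) ≤
      ((N:ℝ) - n) * ∑ i, q i * Real.log (q i) :=
    mul_le_mul_of_nonneg_left G1 hNn
  have G2 : ∑ i, p' i * Real.log (p i) ≤ ∑ i, p' i * Real.log (p' i) :=
    gibbs p' p hp'pos hp hp'1 (le_of_eq hp1)
  -- (w i + 1) = N * p' i
  have hw1 : ∀ i, w i + 1 = (N:ℝ) * p' i := fun i => by
    rw [hp' i]; field_simp
  have G2' : ∑ i, (w i + 1) * Real.log (p i) ≤ ∑ i, (w i + 1) * Real.log (p' i) := by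
    have e1 : ∑ i, (w i + 1) * Real.log (p i) = (N:ℝ) * ∑ i, p' i * Real.log (p i) := by
      rw [Finset.mul_sum]
      exact Finset.sum_congr rfl fun i _ => by rw [hw1 i]; ring
    have e2 : ∑ i, (w i + 1) * Real.log (p' i) = (N:ℝ) * ∑ i, p' i * Real.log (p' i) := by
      rw [Finset.mul_sum]
      exact Finset.sum_congr rfl fun i _ => by rw [hw1 i]; ring
    rw [e1, e2]
    exact mul_le_mul_of_nonneg_left G2 hNpos.le
  -- ellOne decomposition
  have hell : ∀ γ : Fin s → ℝ, ellOne d z z0 w γ =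
      (∑ i, ∑ k, (if d i k then Real.log (capProb γ (z i k))
        else Real.log (1 - capProb γ (z i k))))
      + ∑ i, w i * Real.log (phiNever γ (z0 i)) := by
    intro γ
    unfold ellOne
    rw [← Finset.sum_add_distrib]
    refine Finset.sum_congr rfl fun i _ => ?_
    rw [Finset.sum_add_distrib, ← Finset.mul_sum, log_phiNever]
  have hellβ := hell β
  have hellβ' := hell β'
  -- log q identities
  have hlogq : ∀ i, Real.log (q i) =
      Real.log (phiNever β (z0 i)) + Real.log (p i) - Real.log α := by
    intro i
    simp only [hqdef]
    rw [Real.log_div (mul_pos (hΦpos i) (hp i)).ne' hαpos.ne',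
      Real.log_mul (hΦpos i).ne' (hp i).ne']
  have hlogq' : ∀ i, Real.log (q' i) =
      Real.log (phiNever β' (z0 i)) + Real.log (p' i) - Real.log α' := by
    intro i
    simp only [hq'def]
    rw [Real.log_div (mul_pos (hΦ'pos i) (hp'pos i)).ne' hα'pos.ne',
      Real.log_mul (hΦ'pos i).ne' (hp'pos i).ne']
  have hsum1 : ((N:ℝ) - n) * ∑ i, q i * Real.log (q i) =
      ∑ i, w i * Real.log (phiNever β (z0 i)) + ∑ i, w i * Real.log (p i)
        - ((N:ℝ) - n) * Real.log α := by
    rw [Finset.mul_sum]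
    have e : ∀ i, ((N:ℝ) - n) * (q i * Real.log (q i)) =
        w i * Real.log (phiNever β (z0 i)) + w i * Real.log (p i)
          - w i * Real.log α := by
      intro i; rw [hwq i, hlogq i]; ring
    rw [Finset.sum_congr rfl fun i _ => e i, Finset.sum_sub_distrib,
      Finset.sum_add_distrib, ← Finset.sum_mul, hwsum]
  have hsum1' : ((N:ℝ) - n) * ∑ i, q i * Real.log (q' i) =
      ∑ i, w i * Real.log (phiNever β' (z0 i)) + ∑ i, w i * Real.log (p' i)
        - ((N:ℝ) - n) * Real.log α' := by
    rw [Finset.mul_sum]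
    have e : ∀ i, ((N:ℝ) - n) * (q i * Real.log (q' i)) =
        w i * Real.log (phiNever β' (z0 i)) + w i * Real.log (p' i)
          - w i * Real.log α' := by
      intro i; rw [hwq i, hlogq' i]; ring
    rw [Finset.sum_congr rfl fun i _ => e i, Finset.sum_sub_distrib,
      Finset.sum_add_distrib, ← Finset.sum_mul, hwsum]
  have hsum2 : ∑ i, (w i + 1) * Real.log (p i) =
      ∑ i, w i * Real.log (p i) + ∑ i, Real.log (p i) := by
    rw [← Finset.sum_add_distrib]
    exact Finset.sum_congr rfl fun i _ => by ring
  have hsum2' : ∑ i, (w i + 1) * Real.log (p' i) =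
      ∑ i, w i * Real.log (p' i) + ∑ i, Real.log (p' i) := by
    rw [← Finset.sum_add_distrib]
    exact Finset.sum_congr rfl fun i _ => by ring
  have hmaxN := hmax N hN
  simp only [logEL]
  linarith [hβ', hellβ, hellβ', G1s, G2', hsum1, hsum1', hsum2, hsum2', hmaxN]
end
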